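/- For every integer k ≥ 2, the relative worst order ratio of DH_k to DNF equals 3/2; that is: (i) there is a constant b₁ such that DH_k,W(I) ≤ (3/2)·DNF_W(I) + b₁ for every input sequence I, and (ii) for every c < 3/2 and every constant b there exists an input sequence I with DH_k,W(I) > c·DNF_W(I) + b. -/

import Mathlib

open Filter MeasureTheory

/-- A valid bin covering input: all item sizes lie strictly between 0 and 1. -/
def validInput (I : List ℝ) : Prop := ∀ x ∈ I, 0 < x ∧ x < 1

/-- The total volume (sum of item sizes) of an input sequence. -/
def vol (I : List ℝ) : ℝ := I.sum

/-- One step of Dual Next-Fit: the state is the level of the open bin (0 if none)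
together with the number of covered (closed) bins so far. -/
noncomputable def dnfStep (s : ℝ × ℕ) (x : ℝ) : ℝ × ℕ :=
  if 1 ≤ s.1 + x then (0, s.2 + 1) else (s.1 + x, s.2)

/-- The number of bins covered by Dual Next-Fit on input `I`. -/
noncomputable def dnfCount (I : List ℝ) : ℕ := (I.foldl dnfStep (0, 0)).2

/-- The number of bins covered by the Dual Harmonic algorithm `DH_k` on input `I`:
items in `[1/j, 1/(j-1))` (for `2 ≤ j ≤ k`) are packed `j` to a bin, and items
in `(0, 1/k)` are packed in Next-Fit fashion in separate bins. -/
noncomputable def dhCount (k : ℕ) (I : List ℝ) : ℕ :=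
  (∑ j ∈ Finset.Icc 2 k,
      (I.countP fun x => decide ((1:ℝ)/(j:ℝ) ≤ x ∧ x < 1/((j:ℝ)-1))) / j)
  + dnfCount (I.filter fun x => decide (x < 1/(k:ℝ)))

/-- The optimal (offline) number of covered bins: the maximum, over all assignments
of the items of `I` to bins, of the number of bins receiving total size at least 1. -/
noncomputable def optCount (I : List ℝ) : ℕ :=
  Finset.sup Finset.univ (fun f : Fin I.length → Fin I.length =>
    (Finset.univ.filter fun b : Fin I.length =>
      1 ≤ ∑ i ∈ Finset.univ.filter (fun i => f i = b), I.get i).card)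

/-- The competitive ratio of the algorithm `A` restricted to input sequences with
all item sizes in `S`: the supremum of all `c` such that for some constant `b`,
`A I ≥ c·Opt I + b` for all such inputs. -/
noncomputable def CRrestricted (S : Set ℝ) (A : List ℝ → ℕ) : ℝ :=
  sSup {c : ℝ | ∃ b : ℝ, ∀ I : List ℝ, (∀ x ∈ I, x ∈ S) →
    c * (optCount I : ℝ) + b ≤ (A I : ℝ)}

/-- `A`'s performance on a worst permutation of `I`. -/
noncomputable def worstOf (A : List ℝ → ℕ) (I : List ℝ) : ℕ :=
  (I.permutations.map A).foldr min (A I)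

/-- The expected performance of `A` on a uniformly random permutation of `I`. -/
noncomputable def expPerm (A : List ℝ → ℕ) (I : List ℝ) : ℝ :=
  (∑ σ : Equiv.Perm (Fin I.length), (A (List.ofFn fun i => I.get (σ i)) : ℝ)) /
    ((I.length).factorial : ℝ)

/-- `liminf_{v→∞} inf { A(I)/v : vol I = v, items of I in S }`. -/
noncomputable def minRate (S : Set ℝ) (A : List ℝ → ℕ) : ℝ :=
  Filter.liminf (fun v : ℝ =>
    sInf {r : ℝ | ∃ I : List ℝ, (∀ x ∈ I, x ∈ S) ∧ vol I = v ∧ r = (A I : ℝ) / v})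
    Filter.atTop

/-- Expected performance of `A` on `n` items drawn independently and uniformly from `(0,1)`. -/
noncomputable def unifE (A : List ℝ → ℕ) (n : ℕ) : ℝ :=
  ∫ x : Fin n → ℝ, (A (List.ofFn x) : ℝ)
    ∂(Measure.pi fun _ : Fin n => volume.restrict (Set.Ioo (0:ℝ) 1))

/-- Expected performance of `A` on `n` independent items, each of size `ε` with
probability 1/2 and size `1-ε` with probability 1/2. -/
noncomputable def bernE (A : List ℝ → ℕ) (n : ℕ) (ε : ℝ) : ℝ :=
  (∑ f : Fin n → Bool, (A (List.ofFn fun i => if f i then ε else 1 - ε) : ℝ)) / 2^n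

/-- One step of a reasonable online algorithm with decision function `f`:
the accumulator records (history of items seen, levels of the open bins, number of
covered bins).  On item `x`, the algorithm places `x` in the open bin of index
`f hist x` (a new bin is opened if the index is out of range); a bin is closed
exactly when its content reaches 1. -/
noncomputable def algStep (f : List ℝ → ℝ → ℕ) (acc : List ℝ × List ℝ × ℕ) (x : ℝ) :
    List ℝ × List ℝ × ℕ :=
  let hist := acc.1
  let s := acc.2.1
  let c := acc.2.2
  let i := f hist x
  if h : i < s.length then
    if 1 ≤ s.get ⟨i, h⟩ + x then (hist ++ [x], s.eraseIdx i, c + 1)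
    else (hist ++ [x], s.set i (s.get ⟨i, h⟩ + x), c)
  else
    if 1 ≤ x then (hist ++ [x], s, c + 1)
    else (hist ++ [x], s ++ [x], c)

/-- Running the reasonable online algorithm with decision function `f` on input `I`. -/
noncomputable def runAlg (f : List ℝ → ℝ → ℕ) (I : List ℝ) : List ℝ × List ℝ × ℕ :=
  I.foldl (algStep f) ([], [], 0)

noncomputable def credit (I : List ℝ) : ℝ := (I.map fun x => min x (1/2)).sum
lemma foldr_min_le (l : List ℕ) (a : ℕ) : l.foldr min a ≤ a := by
  induction l with
  | nil => simp
  | cons x l ih => simpa using Or.inr ih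

lemma foldr_min_mem (l : List ℕ) (a : ℕ) : l.foldr min a = a ∨ l.foldr min a ∈ l := by
  induction l with
  | nil => simp
  | cons x l ih =>
    simp only [List.foldr_cons]
    rcases le_total x (l.foldr min a) with h | h
    · simp [min_eq_left h]
    · rw [min_eq_right h]
      rcases ih with h1 | h1
      · exact Or.inl h1
      · exact Or.inr (List.mem_cons_of_mem _ h1)

lemma le_foldr_min (l : List ℕ) (a b : ℕ) (ha : b ≤ a) (h : ∀ x ∈ l, b ≤ x) :
    b ≤ l.foldr min a := by
  induction l with
  | nil => simpa
  | cons x l ih =>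
    simp only [List.foldr_cons, le_min_iff]
    exact ⟨h x (by simp), ih fun y hy => h y (List.mem_cons_of_mem _ hy)⟩

lemma repFold (m : ℕ) (s : ℝ) : ∀ (ℓ : ℝ) (c : ℕ), 0 ≤ s → ℓ + m * s < 1 →
    List.foldl dnfStep (ℓ, c) (List.replicate m s) = (ℓ + m * s, c) := by
  induction m with
  | zero => intro ℓ c _ _; simp
  | succ m ih =>
    intro ℓ c hs h
    have hms : (0:ℝ) ≤ m * s := by positivity
    have hstep : dnfStep (ℓ, c) s = (ℓ + s, c) := by
      have : ¬ (1 ≤ ℓ + s) := by push_cast at h; nlinarith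
      simp [dnfStep, this]
    rw [List.replicate_succ, List.foldl_cons, hstep, ih (ℓ + s) c hs (by push_cast at h ⊢; linarith)]
    push_cast
    ring_nf

lemma dnf_fold_le (J : List ℝ) : ∀ (ℓ : ℝ) (c : ℕ), (∀ x ∈ J, 0 < x) → 0 ≤ ℓ →
    0 ≤ (J.foldl dnfStep (ℓ, c)).1 ∧
      ((J.foldl dnfStep (ℓ, c)).2 : ℝ) + (J.foldl dnfStep (ℓ, c)).1 ≤ c + ℓ + J.sum := by
  induction J with
  | nil =>
    intro ℓ c _ hℓ
    refine ⟨by simpa using hℓ, ?_⟩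
    simp only [List.foldl_nil, List.sum_nil]
    linarith
  | cons x J ih =>
    intro ℓ c hpos hℓ
    have hx : 0 < x := hpos x (by simp)
    have hpos' : ∀ y ∈ J, 0 < y := fun y hy => hpos y (List.mem_cons_of_mem _ hy)
    rw [List.foldl_cons]
    by_cases h : 1 ≤ ℓ + x
    · have : dnfStep (ℓ, c) x = (0, c + 1) := by simp [dnfStep, h]
      rw [this]
      obtain ⟨h1, h2⟩ := ih 0 (c + 1) hpos' le_rfl
      refine ⟨h1, ?_⟩
      push_cast at h2 ⊢
      simp only [List.sum_cons]
      linarith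
    · have : dnfStep (ℓ, c) x = (ℓ + x, c) := by simp [dnfStep, h]
      rw [this]
      obtain ⟨h1, h2⟩ := ih (ℓ + x) c hpos' (by linarith)
      refine ⟨h1, ?_⟩
      simp only [List.sum_cons]
      linarith

lemma dnf_le_vol (J : List ℝ) (h : ∀ x ∈ J, 0 < x) : (dnfCount J : ℝ) ≤ J.sum := by
  obtain ⟨h1, h2⟩ := dnf_fold_le J 0 0 h le_rfl
  unfold dnfCount
  push_cast at h2
  linarith
lemma credit_cons (x : ℝ) (I : List ℝ) : credit (x :: I) = min x (1/2) + credit I := by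
  simp [credit]

lemma credit_fold (J : List ℝ) : ∀ (ℓ : ℝ) (c : ℕ), (∀ x ∈ J, 0 < x) → 0 ≤ ℓ → ℓ < 1 →
    credit J + (3/2) * c + ℓ ≤ (3/2) * ((J.foldl dnfStep (ℓ, c)).2 : ℝ) + (J.foldl dnfStep (ℓ, c)).1
      ∧ 0 ≤ (J.foldl dnfStep (ℓ, c)).1 ∧ (J.foldl dnfStep (ℓ, c)).1 < 1 := by
  induction J with
  | nil =>
    intro ℓ c _ h0 h1
    refine ⟨?_, by simpa using h0, by simpa using h1⟩
    simp only [List.foldl_nil]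
    simp [credit]
  | cons x J ih =>
    intro ℓ c hpos h0 h1
    have hx : 0 < x := hpos x (by simp)
    have hpos' : ∀ y ∈ J, 0 < y := fun y hy => hpos y (List.mem_cons_of_mem _ hy)
    rw [List.foldl_cons, credit_cons]
    have hmle : min x (1/2) ≤ x := min_le_left _ _
    have hmhalf : min x (1/2) ≤ 1/2 := min_le_right _ _
    by_cases h : 1 ≤ ℓ + x
    · have hs : dnfStep (ℓ, c) x = (0, c + 1) := by simp [dnfStep, h]
      rw [hs]
      obtain ⟨g1, g2, g3⟩ := ih 0 (c + 1) hpos' le_rfl one_pos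
      refine ⟨?_, g2, g3⟩
      push_cast at g1 ⊢
      linarith
    · have hs : dnfStep (ℓ, c) x = (ℓ + x, c) := by simp [dnfStep, h]
      rw [hs]
      push_neg at h
      obtain ⟨g1, g2, g3⟩ := ih (ℓ + x) c hpos' (by linarith) h
      exact ⟨by linarith, g2, g3⟩

lemma credit_le_dnf (J : List ℝ) (h : ∀ x ∈ J, 0 < x) :
    credit J ≤ (3/2) * (dnfCount J : ℝ) + 1 := by
  obtain ⟨g1, _, g3⟩ := credit_fold J 0 0 h le_rfl one_pos
  unfold dnfCount
  push_cast at g1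
  linarith
lemma credit_filter_cons (q : ℝ → Bool) (x : ℝ) (I : List ℝ) :
    credit ((x :: I).filter q) = (if q x then min x (1/2) else 0) + credit (I.filter q) := by
  rw [List.filter_cons]
  split <;> simp_all [credit_cons]

lemma pointwise (k : ℕ) (hk : 2 ≤ k) (x : ℝ) (hx : 0 < x) :
    (∑ j ∈ Finset.Icc 2 k,
        if (decide ((1:ℝ)/(j:ℝ) ≤ x ∧ x < 1/((j:ℝ)-1))) then min x (1/2) else 0)
      + (if (decide (x < 1/(k:ℝ))) then min x (1/2) else 0) ≤ min x (1/2) := by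
  have hg0 : (0:ℝ) ≤ min x (1/2) := le_min hx.le (by norm_num)
  by_cases hs : x < 1/(k:ℝ)
  · have hz : (∑ j ∈ Finset.Icc 2 k,
        if (decide ((1:ℝ)/(j:ℝ) ≤ x ∧ x < 1/((j:ℝ)-1))) then min x (1/2) else 0) = 0 := by
      apply Finset.sum_eq_zero
      intro j hj
      rw [Finset.mem_Icc] at hj
      have hj2 : (2:ℝ) ≤ (j:ℝ) := by exact_mod_cast hj.1
      have hjk : (j:ℝ) ≤ (k:ℝ) := by exact_mod_cast hj.2
      have : ¬ ((1:ℝ)/(j:ℝ) ≤ x ∧ x < 1/((j:ℝ)-1)) := by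
        rintro ⟨h1, -⟩
        have : (1:ℝ)/(k:ℝ) ≤ 1/(j:ℝ) := by
          apply one_div_le_one_div_of_le <;> linarith
        linarith
      simp only [decide_eq_true_eq]
      rw [if_neg this]
    rw [hz, if_pos (by simpa using hs)]
    linarith
  · rw [if_neg (by simpa using hs), add_zero]
    classical
    set P : ℕ → Prop := fun j => (1:ℝ)/(j:ℝ) ≤ x ∧ x < 1/((j:ℝ)-1) with hP
    have hrw : (∑ j ∈ Finset.Icc 2 k,
        if (decide ((1:ℝ)/(j:ℝ) ≤ x ∧ x < 1/((j:ℝ)-1))) then min x (1/2) else 0)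
        = ∑ j ∈ (Finset.Icc 2 k).filter P, min x (1/2) := by
      rw [Finset.sum_filter]
      apply Finset.sum_congr rfl
      intro j _
      by_cases h : P j
      · rw [if_pos h, if_pos (by simpa [hP] using h)]
      · rw [if_neg h, if_neg (by simpa [hP] using h)]
    rw [hrw, Finset.sum_const, nsmul_eq_mul]
    have hcard : ((Finset.Icc 2 k).filter P).card ≤ 1 := by
      apply Finset.card_le_one.mpr
      intro a ha b hb
      rw [Finset.mem_filter, Finset.mem_Icc] at ha hb
      obtain ⟨⟨ha2, -⟩, ⟨ha1, ha3⟩⟩ := ha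
      obtain ⟨⟨hb2, -⟩, ⟨hb1, hb3⟩⟩ := hb
      by_contra hne
      rcases lt_or_gt_of_ne hne with h | h
      · -- a < b : 1/(b-1) ≤ 1/a ≤ x, contradiction with x < 1/(b-1)
        have hab : (a:ℝ) ≤ (b:ℝ) - 1 := by
          have : a + 1 ≤ b := h
          have := (Nat.cast_le (α := ℝ)).mpr this
          push_cast at this
          linarith
        have ha0 : (0:ℝ) < (a:ℝ) := by
          have : (2:ℝ) ≤ (a:ℝ) := by exact_mod_cast ha2
          linarith
        have : (1:ℝ)/((b:ℝ)-1) ≤ 1/(a:ℝ) := one_div_le_one_div_of_le ha0 hab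
        linarith
      · have hab : (b:ℝ) ≤ (a:ℝ) - 1 := by
          have : b + 1 ≤ a := h
          have := (Nat.cast_le (α := ℝ)).mpr this
          push_cast at this
          linarith
        have hb0 : (0:ℝ) < (b:ℝ) := by
          have : (2:ℝ) ≤ (b:ℝ) := by exact_mod_cast hb2
          linarith
        have : (1:ℝ)/((a:ℝ)-1) ≤ 1/(b:ℝ) := one_div_le_one_div_of_le hb0 hab
        linarith
    calc (((Finset.Icc 2 k).filter P).card : ℝ) * min x (1/2)
        ≤ 1 * min x (1/2) := by
          apply mul_le_mul_of_nonneg_right _ hg0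
          exact_mod_cast hcard
      _ = min x (1/2) := one_mul _

lemma partition_le (k : ℕ) (hk : 2 ≤ k) (I : List ℝ) (hI : ∀ x ∈ I, 0 < x) :
    (∑ j ∈ Finset.Icc 2 k,
        credit (I.filter fun x => decide ((1:ℝ)/(j:ℝ) ≤ x ∧ x < 1/((j:ℝ)-1))))
      + credit (I.filter fun x => decide (x < 1/(k:ℝ))) ≤ credit I := by
  induction I with
  | nil => simp [credit]
  | cons x I ih =>
    have hx : 0 < x := hI x (by simp)
    have hI' : ∀ y ∈ I, 0 < y := fun y hy => hI y (List.mem_cons_of_mem _ hy)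
    rw [credit_cons]
    simp only [credit_filter_cons]
    rw [Finset.sum_add_distrib]
    have := pointwise k hk x hx
    have := ih hI'
    linarith

lemma length_mul_le_credit (l : List ℝ) (a : ℝ) (h : ∀ x ∈ l, a ≤ min x (1/2)) :
    (l.length : ℝ) * a ≤ credit l := by
  induction l with
  | nil => simp [credit]
  | cons x l ih =>
    have h1 := h x (by simp)
    have h2 := ih fun y hy => h y (List.mem_cons_of_mem _ hy)
    rw [credit_cons, List.length_cons]
    push_cast
    nlinarith [h2]

lemma credit_eq_sum (l : List ℝ) (h : ∀ x ∈ l, x ≤ 1/2) : credit l = l.sum := by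
  unfold credit
  rw [List.map_congr_left (fun x hx => min_eq_left (h x hx))]
  simp

lemma dh_le_credit (k : ℕ) (hk : 2 ≤ k) (I : List ℝ) (hI : validInput I) :
    (dhCount k I : ℝ) ≤ credit I := by
  have hk2 : (2:ℝ) ≤ (k:ℝ) := by exact_mod_cast hk
  unfold dhCount
  push_cast
  have hsum : ∀ j ∈ Finset.Icc 2 k,
      (((I.countP fun x => decide ((1:ℝ)/(j:ℝ) ≤ x ∧ x < 1/((j:ℝ)-1))) / j : ℕ) : ℝ)
        ≤ credit (I.filter fun x => decide ((1:ℝ)/(j:ℝ) ≤ x ∧ x < 1/((j:ℝ)-1))) := by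
    intro j hj
    rw [Finset.mem_Icc] at hj
    have hj2 : (2:ℝ) ≤ (j:ℝ) := by exact_mod_cast hj.1
    set p : ℝ → Bool := fun x => decide ((1:ℝ)/(j:ℝ) ≤ x ∧ x < 1/((j:ℝ)-1)) with hp
    calc ((I.countP p / j : ℕ) : ℝ) ≤ (I.countP p : ℝ) / (j:ℝ) := Nat.cast_div_le
      _ = ((I.filter p).length : ℝ) * (1/(j:ℝ)) := by
          rw [List.countP_eq_length_filter]; ring
      _ ≤ credit (I.filter p) := by
          apply length_mul_le_credit
          intro x hx
          rw [List.mem_filter] at hx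
          have hx2 := hx.2
          rw [hp] at hx2
          simp only [decide_eq_true_eq] at hx2
          refine le_min hx2.1 ?_
          rw [div_le_div_iff₀ (by linarith) (by norm_num)]
          linarith
  have hsmall : ((dnfCount (I.filter fun x => decide (x < 1/(k:ℝ)))) : ℝ)
      ≤ credit (I.filter fun x => decide (x < 1/(k:ℝ))) := by
    have hmem : ∀ x ∈ (I.filter fun x => decide (x < 1/(k:ℝ))), 0 < x := by
      intro x hx
      rw [List.mem_filter] at hx
      exact (hI x hx.1).1
    have := dnf_le_vol _ hmem
    rw [credit_eq_sum]
    · exact this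
    · intro x hx
      rw [List.mem_filter] at hx
      have hx2 := hx.2
      simp only [decide_eq_true_eq] at hx2
      have : (1:ℝ)/(k:ℝ) ≤ 1/2 := by
        rw [div_le_div_iff₀ (by linarith) (by norm_num)]; linarith
      linarith
  calc (∑ j ∈ Finset.Icc 2 k,
          (((I.countP fun x => decide ((1:ℝ)/(j:ℝ) ≤ x ∧ x < 1/((j:ℝ)-1))) / j : ℕ) : ℝ))
        + ((dnfCount (I.filter fun x => decide (x < 1/(k:ℝ)))) : ℝ)
      ≤ (∑ j ∈ Finset.Icc 2 k,
          credit (I.filter fun x => decide ((1:ℝ)/(j:ℝ) ≤ x ∧ x < 1/((j:ℝ)-1))))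
        + credit (I.filter fun x => decide (x < 1/(k:ℝ))) := by
        exact add_le_add (Finset.sum_le_sum hsum) hsmall
    _ ≤ credit I := partition_le k hk I fun x hx => (hI x hx).1

lemma part_i (k : ℕ) (hk : 2 ≤ k) (I : List ℝ) (hI : validInput I) :
    (worstOf (dhCount k) I : ℝ) ≤ (3/2) * (worstOf dnfCount I : ℝ) + 1 := by
  obtain ⟨J, hJperm, hJeq⟩ : ∃ J, J.Perm I ∧ dnfCount J = worstOf dnfCount I := by
    rcases foldr_min_mem (I.permutations.map dnfCount) (dnfCount I) with h | h
    · exact ⟨I, List.Perm.refl I, h.symm⟩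
    · rw [List.mem_map] at h
      obtain ⟨J, hJ, hJ2⟩ := h
      exact ⟨J, (List.mem_permutations.mp hJ), hJ2⟩
  have hJvalid : ∀ x ∈ J, 0 < x := fun x hx => (hI x (hJperm.mem_iff.mp hx)).1
  have h1 : (worstOf (dhCount k) I : ℝ) ≤ (dhCount k I : ℝ) := by
    exact_mod_cast foldr_min_le (I.permutations.map (dhCount k)) (dhCount k I)
  have h2 : (dhCount k I : ℝ) ≤ credit I := dh_le_credit k hk I hI
  have h3 : credit I = credit J := by
    unfold credit
    exact List.Perm.sum_eq ((hJperm.map _).symm)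
  have h4 : credit J ≤ (3/2) * (dnfCount J : ℝ) + 1 := credit_le_dnf J hJvalid
  rw [hJeq] at h4
  linarith

lemma closeFold (j : ℕ) (hj : 3 ≤ j) (x : ℝ)
    (hx : 1 ≤ ((j:ℝ)-1) * (1/(j:ℝ)) + x) (c : ℕ) :
    List.foldl dnfStep (0, c) (List.replicate (j-1) ((1:ℝ)/(j:ℝ)) ++ [x]) = (0, c+1) := by
  have hj3 : (3:ℝ) ≤ (j:ℝ) := by exact_mod_cast hj
  have hj0 : (0:ℝ) < (j:ℝ) := by linarith
  have hcast : ((j-1 : ℕ) : ℝ) = (j:ℝ) - 1 := by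
    have h1 : 1 ≤ j := by omega
    push_cast [h1]
    ring
  have hlt : (0:ℝ) + ((j-1:ℕ):ℝ) * (1/(j:ℝ)) < 1 := by
    rw [hcast, zero_add, mul_one_div, div_lt_one hj0]; linarith
  rw [List.foldl_append, repFold _ _ 0 c (by positivity) hlt]
  have hcond : 1 ≤ (0:ℝ) + ((j-1:ℕ):ℝ) * (1/(j:ℝ)) + x := by
    rw [hcast, zero_add]; linarith
  simp only [List.foldl_cons, List.foldl_nil, dnfStep]
  rw [if_pos hcond]

lemma flatFold (bl : List ℝ) (hbl : ∀ c, List.foldl dnfStep (0, c) bl = (0, c+1)) :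
    ∀ (L c : ℕ), List.foldl dnfStep (0, c) (List.replicate L bl).flatten = (0, c+L) := by
  intro L
  induction L with
  | zero => intro c; simp
  | succ L ih =>
    intro c
    rw [List.replicate_succ, List.flatten_cons, List.foldl_append, hbl c, ih]
    have : c + 1 + L = c + (L + 1) := by omega
    rw [this]

lemma dnfRep (j : ℕ) (hj : 3 ≤ j) : ∀ (m c : ℕ),
    List.foldl dnfStep (0, c) (List.replicate (j*m) ((1:ℝ)/(j:ℝ))) = (0, c+m) := by
  have hj3 : (3:ℝ) ≤ (j:ℝ) := by exact_mod_cast hj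
  have hj0 : (j:ℝ) ≠ 0 := by linarith
  intro m
  induction m with
  | zero => intro c; simp
  | succ m ih =>
    intro c
    have h1 : j * (m+1) = j + j * m := by ring
    have h2 : List.replicate j ((1:ℝ)/(j:ℝ))
        = List.replicate (j-1) ((1:ℝ)/(j:ℝ)) ++ [(1:ℝ)/(j:ℝ)] := by
      have h : List.replicate (j-1+1) ((1:ℝ)/(j:ℝ)) = List.replicate (j-1) ((1:ℝ)/(j:ℝ)) ++ [(1:ℝ)/(j:ℝ)] :=
        List.replicate_succ'
      rwa [show j - 1 + 1 = j by omega] at h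
    have h3 : (1:ℝ) ≤ ((j:ℝ)-1) * (1/(j:ℝ)) + 1/(j:ℝ) := by
      field_simp
      linarith
    rw [h1, List.replicate_add, List.foldl_append, h2, closeFold j hj _ h3 c, ih]
    have : c + 1 + m = c + (m + 1) := by omega
    rw [this]

lemma countP_flat (p : ℝ → Bool) (bl : List ℝ) :
    ∀ L, List.countP p (List.replicate L bl).flatten = L * List.countP p bl := by
  intro L
  induction L with
  | zero => simp
  | succ L ih =>
    rw [List.replicate_succ, List.flatten_cons, List.countP_append, ih]
    ring

lemma filter_flat (p : ℝ → Bool) (bl : List ℝ) :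
    ∀ L, (List.replicate L bl).flatten.filter p = (List.replicate L (bl.filter p)).flatten := by
  intro L
  induction L with
  | zero => simp
  | succ L ih =>
    rw [List.replicate_succ, List.flatten_cons, List.filter_append, ih,
      List.replicate_succ, List.flatten_cons]

lemma flat_rep_rep (L m : ℕ) (a : ℝ) :
    (List.replicate L (List.replicate m a)).flatten = List.replicate (L*m) a := by
  induction L with
  | zero => simp
  | succ L ih =>
    rw [List.replicate_succ, List.flatten_cons, ih,
      show (L+1)*m = m + L*m by ring, List.replicate_add]

section Construction

variable (k j M : ℕ)

lemma mem_input (L : ℕ) (bl : List ℝ) {x : ℝ}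
    (hx : x ∈ (List.replicate L bl).flatten) : x ∈ bl := by
  rw [List.mem_flatten] at hx
  obtain ⟨l, hl, hxl⟩ := hx
  rwa [List.eq_of_mem_replicate hl] at hxl

lemma input_valid (hk : 2 ≤ k) (hj : k + 1 ≤ j) (L : ℕ) :
    validInput ((List.replicate L (List.replicate (j-1) ((1:ℝ)/(j:ℝ)) ++ [(3:ℝ)/4])).flatten) := by
  have hj3 : (3:ℝ) ≤ (j:ℝ) := by exact_mod_cast (by omega : 3 ≤ j)
  intro x hx
  have := mem_input L _ hx
  rw [List.mem_append] at this
  rcases this with h | h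
  · rw [List.eq_of_mem_replicate h]
    constructor
    · positivity
    · rw [div_lt_one (by linarith)]; linarith
  · rw [List.mem_singleton] at h
    rw [h]; norm_num

lemma dnf_eval (hk : 2 ≤ k) (hj : k + 1 ≤ j) (L : ℕ) :
    dnfCount ((List.replicate L (List.replicate (j-1) ((1:ℝ)/(j:ℝ)) ++ [(3:ℝ)/4])).flatten) = L := by
  have hj3 : 3 ≤ j := by omega
  have hj3' : (3:ℝ) ≤ (j:ℝ) := by exact_mod_cast hj3
  have hcond : (1:ℝ) ≤ ((j:ℝ)-1) * (1/(j:ℝ)) + 3/4 := by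
    rw [mul_one_div]
    have h1 : (1:ℝ)/(j:ℝ) ≤ 1/3 := by
      apply one_div_le_one_div_of_le <;> linarith
    have h2 : ((j:ℝ)-1)/(j:ℝ) = 1 - 1/(j:ℝ) := by
      field_simp
    rw [h2]; linarith
  unfold dnfCount
  rw [flatFold _ (closeFold j hj3 (3/4) hcond) L 0]
  simp

lemma dh_eval (hk : 2 ≤ k) (hj : k + 1 ≤ j) (J : List ℝ)
    (hJ : J.Perm ((List.replicate (2*j*M)
      (List.replicate (j-1) ((1:ℝ)/(j:ℝ)) ++ [(3:ℝ)/4])).flatten)) :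
    dhCount k J = j*M + 2*M*(j-1) := by
  have hj3 : 3 ≤ j := by omega
  have hj3' : (3:ℝ) ≤ (j:ℝ) := by exact_mod_cast hj3
  have hk2 : (2:ℝ) ≤ (k:ℝ) := by exact_mod_cast hk
  have hkj : (k:ℝ) < (j:ℝ) := by exact_mod_cast (by omega : k < j)
  have hjinv : (1:ℝ)/(j:ℝ) < 1/(k:ℝ) := by
    apply one_div_lt_one_div_of_lt <;> linarith
  set bl : List ℝ := List.replicate (j-1) ((1:ℝ)/(j:ℝ)) ++ [(3:ℝ)/4] with hbl
  set I : List ℝ := (List.replicate (2*j*M) bl).flatten with hI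
  unfold dhCount
  -- evaluate the harmonic sum
  have hsum : (∑ j' ∈ Finset.Icc 2 k,
      (J.countP fun x => decide ((1:ℝ)/(j':ℝ) ≤ x ∧ x < 1/((j':ℝ)-1))) / j') = j*M := by
    rw [Finset.sum_eq_single_of_mem 2 (Finset.mem_Icc.mpr ⟨le_refl 2, hk⟩)]
    · -- term at 2
      have hc : (J.countP fun x => decide ((1:ℝ)/((2:ℕ):ℝ) ≤ x ∧ x < 1/(((2:ℕ):ℝ)-1)))
          = 2*j*M := by
        rw [hJ.countP_eq, hI, countP_flat, hbl, List.countP_append]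
        have h1 : (List.countP (fun x => decide ((1:ℝ)/((2:ℕ):ℝ) ≤ x ∧ x < 1/(((2:ℕ):ℝ)-1)))
            (List.replicate (j-1) ((1:ℝ)/(j:ℝ)))) = 0 := by
          rw [List.countP_replicate, if_neg]
          simp only [decide_eq_true_eq, not_and]
          intro h
          exfalso
          have : (1:ℝ)/(j:ℝ) ≤ 1/3 := by apply one_div_le_one_div_of_le <;> linarith
          rw [one_div] at this
          norm_num at h
          linarith
        have h2 : (List.countP (fun x => decide ((1:ℝ)/((2:ℕ):ℝ) ≤ x ∧ x < 1/(((2:ℕ):ℝ)-1)))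
            [(3:ℝ)/4]) = 1 := by
          simp only [List.countP_cons, List.countP_nil]
          norm_num
        rw [h1, h2]
        ring
      rw [hc, show 2*j*M = 2*(j*M) by ring, Nat.mul_div_cancel_left _ (by norm_num)]
    · -- other terms vanish
      intro j' hj' hne
      rw [Finset.mem_Icc] at hj'
      have hj'2 : 3 ≤ j' := by omega
      have hj'2' : (3:ℝ) ≤ (j':ℝ) := by exact_mod_cast hj'2
      have hj'k : (j':ℝ) ≤ (k:ℝ) := by exact_mod_cast hj'.2
      have hc0 : (J.countP fun x => decide ((1:ℝ)/(j':ℝ) ≤ x ∧ x < 1/((j':ℝ)-1))) = 0 := by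
        rw [List.countP_eq_zero]
        intro x hx
        have hxI : x ∈ I := hJ.mem_iff.mp hx
        have hxbl := mem_input _ _ hxI
        rw [hbl, List.mem_append] at hxbl
        simp only [decide_eq_true_eq, not_and]
        rcases hxbl with h | h
        · rw [List.eq_of_mem_replicate h]
          intro hle
          exfalso
          have h1 : (1:ℝ)/(k:ℝ) ≤ 1/(j':ℝ) := by
            apply one_div_le_one_div_of_le <;> linarith
          linarith
        · rw [List.mem_singleton] at h
          rw [h]
          intro _
          have h1 : (1:ℝ)/((j':ℝ)-1) ≤ 1/2 := by
            apply one_div_le_one_div_of_le <;> linarith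
          linarith
      rw [hc0, Nat.zero_div]
  rw [hsum]
  -- evaluate the small items
  have hfI : I.filter (fun x => decide (x < 1/(k:ℝ)))
      = List.replicate ((2*j*M)*(j-1)) ((1:ℝ)/(j:ℝ)) := by
    rw [hI, filter_flat, hbl]
    have h1 : (List.replicate (j-1) ((1:ℝ)/(j:ℝ)) ++ [(3:ℝ)/4]).filter
        (fun x => decide (x < 1/(k:ℝ)))
        = List.replicate (j-1) ((1:ℝ)/(j:ℝ)) := by
      rw [List.filter_append, List.filter_replicate, if_pos (by simpa using hjinv)]
      have : (List.filter (fun x => decide (x < 1/(k:ℝ))) [(3:ℝ)/4]) = [] := by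
        simp only [List.filter_cons, List.filter_nil]
        rw [if_neg]
        simp only [decide_eq_true_eq, not_lt]
        have : (1:ℝ)/(k:ℝ) ≤ 1/2 := by apply one_div_le_one_div_of_le <;> linarith
        linarith
      rw [this, List.append_nil]
    rw [h1, flat_rep_rep]
  have hfJ : J.filter (fun x => decide (x < 1/(k:ℝ)))
      = List.replicate ((2*j*M)*(j-1)) ((1:ℝ)/(j:ℝ)) := by
    rw [List.eq_replicate_iff]
    constructor
    · rw [(hJ.filter _).length_eq, hfI, List.length_replicate]
    · intro b hb
      have := (hJ.filter (fun x => decide (x < 1/(k:ℝ)))).mem_iff.mp hb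
      rw [hfI] at this
      exact List.eq_of_mem_replicate this
  rw [hfJ]
  have hrep : (2*j*M)*(j-1) = j*(2*M*(j-1)) := by ring
  rw [hrep]
  unfold dnfCount
  rw [dnfRep j hj3 (2*M*(j-1)) 0]
  simp

end Construction

lemma part_ii (k : ℕ) (hk : 2 ≤ k) (c : ℝ) (hc : c < 3/2) (b : ℝ) :
    ∃ I : List ℝ, validInput I ∧
      c * (worstOf dnfCount I : ℝ) + b < (worstOf (dhCount k) I : ℝ) := by
  set c' := max c 0 with hc'def
  have hc' : c' < 3/2 := max_lt hc (by norm_num)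
  have hc'0 : (0:ℝ) ≤ c' := le_max_right _ _
  have hcc' : c ≤ c' := le_max_left _ _
  obtain ⟨n, hn⟩ := exists_nat_one_div_lt (show (0:ℝ) < 3/2 - c' by linarith)
  set j := max (n+1) (k+1) with hjdef
  have hjk : k + 1 ≤ j := le_max_right _ _
  have hj3 : 3 ≤ j := by omega
  have hjn : n + 1 ≤ j := le_max_left _ _
  have hj0 : (0:ℝ) < (j:ℝ) := by
    have : (3:ℝ) ≤ (j:ℝ) := by exact_mod_cast hj3
    linarith
  have hjfrac : (1:ℝ)/(j:ℝ) < 3/2 - c' := by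
    have h1 : ((n:ℝ) + 1) ≤ (j:ℝ) := by exact_mod_cast hjn
    have h2 : (1:ℝ)/(j:ℝ) ≤ 1/((n:ℝ)+1) := by
      apply one_div_le_one_div_of_le _ h1
      positivity
    linarith
  have hδ : (0:ℝ) < (3*(j:ℝ) - 2) - 2*(j:ℝ)*c' := by
    have h := (div_lt_iff₀ hj0).mp hjfrac
    nlinarith
  obtain ⟨M, hM⟩ := exists_nat_gt (b / ((3*(j:ℝ) - 2) - 2*(j:ℝ)*c'))
  have hb : b < (M:ℝ) * ((3*(j:ℝ) - 2) - 2*(j:ℝ)*c') := by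
    rw [div_lt_iff₀ hδ] at hM
    linarith
  set I : List ℝ := (List.replicate (2*j*M)
    (List.replicate (j-1) ((1:ℝ)/(j:ℝ)) ++ [(3:ℝ)/4])).flatten with hIdef
  refine ⟨I, input_valid k j hk hjk _, ?_⟩
  have hdnf : dnfCount I = 2*j*M := dnf_eval k j hk hjk (2*j*M)
  have hW : worstOf dnfCount I ≤ 2*j*M := by
    rw [← hdnf]
    exact foldr_min_le _ _
  have hdh : j*M + 2*M*(j-1) ≤ worstOf (dhCount k) I := by
    apply le_foldr_min
    · exact (dh_eval k j M hk hjk I (List.Perm.refl I)).ge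
    · intro y hy
      rw [List.mem_map] at hy
      obtain ⟨J, hJ, rfl⟩ := hy
      exact (dh_eval k j M hk hjk J (List.mem_permutations.mp hJ)).ge
  have hWr : (worstOf dnfCount I : ℝ) ≤ 2*(j:ℝ)*(M:ℝ) := by
    have := (Nat.cast_le (α := ℝ)).mpr hW
    push_cast at this
    linarith
  have hW0 : (0:ℝ) ≤ (worstOf dnfCount I : ℝ) := Nat.cast_nonneg _
  have hdhr : 3*(j:ℝ)*(M:ℝ) - 2*(M:ℝ) ≤ (worstOf (dhCount k) I : ℝ) := by
    have := (Nat.cast_le (α := ℝ)).mpr hdh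
    have hcast : ((j-1 : ℕ) : ℝ) = (j:ℝ) - 1 := by
      have h1 : 1 ≤ j := by omega
      push_cast [h1]
      ring
    push_cast [hcast] at this
    linarith
  have harith : c' * (2*(j:ℝ)*(M:ℝ)) + b < 3*(j:ℝ)*(M:ℝ) - 2*(M:ℝ) := by nlinarith
  calc c * (worstOf dnfCount I : ℝ) + b
      ≤ c' * (worstOf dnfCount I : ℝ) + b := by
        have := mul_le_mul_of_nonneg_right hcc' hW0
        linarith
    _ ≤ c' * (2*(j:ℝ)*(M:ℝ)) + b := by
        have := mul_le_mul_of_nonneg_left hWr hc'0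
        linarith
    _ < 3*(j:ℝ)*(M:ℝ) - 2*(M:ℝ) := harith
    _ ≤ (worstOf (dhCount k) I : ℝ) := hdhr

/-- For every `k ≥ 2`, the relative worst order ratio of `DH_k` to DNF equals `3/2`:
(i) for some constant `b₁`, `DH_{k,W}(I) ≤ (3/2)·DNF_W(I) + b₁` for every input `I`;
(ii) for every `c < 3/2` and every constant `b` there is an input `I` with
`DH_{k,W}(I) > c·DNF_W(I) + b`. -/
theorem dh_dnf_RWOR (k : ℕ) (hk : 2 ≤ k) :
    (∃ b₁ : ℝ, ∀ I : List ℝ, validInput I →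
      (worstOf (dhCount k) I : ℝ) ≤ (3/2) * (worstOf dnfCount I : ℝ) + b₁) ∧
    (∀ c : ℝ, c < 3/2 → ∀ b : ℝ, ∃ I : List ℝ, validInput I ∧
      c * (worstOf dnfCount I : ℝ) + b < (worstOf (dhCount k) I : ℝ)) := by
  constructor
  · exact ⟨1, fun I hI => part_i k hk I hI⟩
  · exact fun c hc b => part_ii k hk c hc b
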